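/- Let X, Y be in the spectrahedron S_d with X = Σ_{i=1}^k a_i x_i x_iᵀ, where each x_i is a unit vector and (a_1,…,a_k) is a probability distribution. Let P be an orthogonal projection onto a subset of eigenvectors of Y, and set x̃_i := P x_i. Then Σ_{i=1}^k a_i (1 - ‖x̃_i‖²) ≤ √(rank(Y)) · ‖Y - P X P‖_F. -/

import Mathlib

open Matrix BigOperators

noncomputable def frobNorm {d : ℕ} (A : Matrix (Fin d) (Fin d) ℝ) : ℝ :=
  Real.sqrt (∑ i, ∑ j, (A i j) ^ 2)

noncomputable def vnorm {d : ℕ} (v : Fin d → ℝ) : ℝ :=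
  Real.sqrt (∑ i, (v i) ^ 2)

def dotp {d : ℕ} (A B : Matrix (Fin d) (Fin d) ℝ) : ℝ :=
  ∑ i, ∑ j, A i j * B i j

def quadForm {d : ℕ} (A : Matrix (Fin d) (Fin d) ℝ) (v : Fin d → ℝ) : ℝ :=
  ∑ i, ∑ j, v i * A i j * v j

/-- The spectrahedron: real symmetric PSD matrices with unit trace. -/
def Spectra (d : ℕ) : Set (Matrix (Fin d) (Fin d) ℝ) :=
  {X | X.PosSemidef ∧ X.trace = 1}

/-- Projection onto the span of eigenvectors of `Y` whose eigenvalues have magnitude ≥ τ. -/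
noncomputable def specProj {d : ℕ} {Y : Matrix (Fin d) (Fin d) ℝ}
    (hY : Y.IsHermitian) (τ : ℝ) : Matrix (Fin d) (Fin d) ℝ :=
  ∑ j : Fin d, if τ ≤ |hY.eigenvalues j| then
    Matrix.vecMulVec (fun i => hY.eigenvectorBasis j i) (fun i => hY.eigenvectorBasis j i)
  else 0

set_option maxHeartbeats 1000000 in
theorem stmt3 {d k : ℕ} (X Y : Matrix (Fin d) (Fin d) ℝ)
    (hX : X.PosSemidef) (hXtr : X.trace = 1)
    (hY : Y.PosSemidef) (hYtr : Y.trace = 1)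
    (a : Fin k → ℝ) (x : Fin k → Fin d → ℝ)
    (ha : ∀ i, 0 ≤ a i) (hsum : ∑ i, a i = 1)
    (hunit : ∀ i, vnorm (x i) = 1)
    (hdecomp : X = ∑ i, a i • Matrix.vecMulVec (x i) (x i))
    (J : Finset (Fin d)) (P : Matrix (Fin d) (Fin d) ℝ)
    (hP : P = ∑ j ∈ J,
      Matrix.vecMulVec (fun i => hY.1.eigenvectorBasis j i) (fun i => hY.1.eigenvectorBasis j i)) :
    ∑ i, a i * (1 - (vnorm (P.mulVec (x i))) ^ 2)
      ≤ Real.sqrt (Y.rank) * frobNorm (Y - P * X * P) := by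
  classical
  set U : Matrix (Fin d) (Fin d) ℝ := (hY.1.eigenvectorUnitary : Matrix (Fin d) (Fin d) ℝ) with hU
  have hstar : star U = Uᵀ := by
    ext i j; simp [Matrix.star_eq_conjTranspose, Matrix.conjTranspose_apply]
  have h1 : Uᵀ * U = 1 := by
    rw [← hstar]; exact Unitary.coe_star_mul_self hY.1.eigenvectorUnitary
  have h2 : U * Uᵀ = 1 := by
    rw [← hstar]; exact Unitary.coe_mul_star_self hY.1.eigenvectorUnitary
  have hUapp : ∀ i j, U i j = hY.1.eigenvectorBasis j i := fun i j => rfl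
  have hPsymm : Pᵀ = P := by
    rw [hP, Matrix.transpose_sum]
    refine Finset.sum_congr rfl fun j _ => ?_
    ext p q
    simp [Matrix.vecMulVec_apply, Matrix.transpose_apply, mul_comm]
  have hvP : ∀ v : Fin d → ℝ, v ᵥ* P = P *ᵥ v := by
    intro v
    conv_lhs => rw [← hPsymm]
    rw [Matrix.vecMul_transpose]
  set M : Matrix (Fin d) (Fin d) ℝ := Y - P * X * P with hM
  set N : Matrix (Fin d) (Fin d) ℝ := Uᵀ * M * U with hN
  have hNdiag : ∀ j, N j j =
      (fun i => hY.1.eigenvectorBasis j i) ⬝ᵥ (M *ᵥ (fun i => hY.1.eigenvectorBasis j i)) := by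
    intro j
    simp only [hN, Matrix.mul_apply, Matrix.transpose_apply, dotProduct, Matrix.mulVec,
      Finset.sum_mul, Finset.mul_sum]
    rw [Finset.sum_comm]
    exact Finset.sum_congr rfl fun p _ => Finset.sum_congr rfl fun q _ => by
      rw [hUapp, hUapp]; ring
  have hee : ∀ j, (fun i => hY.1.eigenvectorBasis j i) ⬝ᵥ (fun i => hY.1.eigenvectorBasis j i)
      = 1 := by
    intro j
    have := congrFun (congrFun h1 j) j
    simpa [Matrix.mul_apply, Matrix.transpose_apply, Matrix.one_apply, dotProduct, hUapp]
      using this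
  have hYe : ∀ j, (fun i => hY.1.eigenvectorBasis j i) ⬝ᵥ
      (Y *ᵥ (fun i => hY.1.eigenvectorBasis j i)) = hY.1.eigenvalues j := by
    intro j
    have h : (Y *ᵥ fun i => hY.1.eigenvectorBasis j i)
        = fun i => hY.1.eigenvalues j * hY.1.eigenvectorBasis j i := by
      funext i
      exact congrFun (hY.1.mulVec_eigenvectorBasis j) i
    rw [h]
    have h0 := hee j
    simp only [dotProduct] at h0 ⊢
    calc ∑ i, hY.1.eigenvectorBasis j i * (hY.1.eigenvalues j * hY.1.eigenvectorBasis j i)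
        = hY.1.eigenvalues j * ∑ i, hY.1.eigenvectorBasis j i * hY.1.eigenvectorBasis j i := by
          rw [Finset.mul_sum]; exact Finset.sum_congr rfl fun i _ => by ring
      _ = hY.1.eigenvalues j := by rw [h0, mul_one]
  have hPXP : ∀ v : Fin d → ℝ, v ⬝ᵥ ((P * X * P) *ᵥ v)
      = (P *ᵥ v) ⬝ᵥ (X *ᵥ (P *ᵥ v)) := by
    intro v
    rw [← Matrix.mulVec_mulVec, ← Matrix.mulVec_mulVec, dotProduct_mulVec, hvP]
  have hXpsd : ∀ v : Fin d → ℝ, 0 ≤ v ⬝ᵥ (X *ᵥ v) := by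
    intro v; simpa using hX.dotProduct_mulVec_nonneg v
  have htrN : ∑ j, N j j = M.trace := by
    have : N.trace = M.trace := by
      rw [hN, Matrix.trace_mul_cycle, h2, Matrix.one_mul]
    simpa [Matrix.trace, Matrix.diag] using this
  have tracevmv : ∀ (v w : Fin d → ℝ) (Q : Matrix (Fin d) (Fin d) ℝ),
      (Matrix.vecMulVec v w * Q).trace = v ⬝ᵥ (Qᵀ *ᵥ w) := by
    intro v w Q
    simp only [Matrix.trace, Matrix.diag, Matrix.mul_apply, Matrix.vecMulVec_apply,
      Matrix.mulVec, dotProduct, Matrix.transpose_apply, Finset.mul_sum]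
    exact Finset.sum_congr rfl fun p _ => Finset.sum_congr rfl fun q _ => by ring
  have htrPXP : (P * X * P).trace = ∑ i, a i * ((P *ᵥ x i) ⬝ᵥ (P *ᵥ x i)) := by
    have hexp : P * X * P = ∑ i, a i • (P * Matrix.vecMulVec (x i) (x i) * P) := by
      rw [hdecomp, Finset.mul_sum, Finset.sum_mul]
      exact Finset.sum_congr rfl fun i _ => by rw [Matrix.mul_smul, Matrix.smul_mul]
    rw [hexp, Matrix.trace_sum]
    refine Finset.sum_congr rfl fun i _ => ?_
    rw [Matrix.trace_smul, smul_eq_mul]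
    congr 1
    rw [Matrix.trace_mul_comm (P * Matrix.vecMulVec (x i) (x i)) P, ← Matrix.mul_assoc,
      Matrix.trace_mul_comm (P * P) (Matrix.vecMulVec (x i) (x i)), tracevmv,
      Matrix.transpose_mul, hPsymm, ← Matrix.mulVec_mulVec, dotProduct_mulVec, hvP]
  have hvnorm : ∀ i, vnorm (P *ᵥ x i) ^ 2 = (P *ᵥ x i) ⬝ᵥ (P *ᵥ x i) := by
    intro i
    simp only [vnorm]
    rw [Real.sq_sqrt (by positivity)]
    simp [dotProduct, sq]
  have hLHS : ∑ i, a i * (1 - (vnorm (P.mulVec (x i))) ^ 2) = M.trace := by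
    calc ∑ i, a i * (1 - (vnorm (P.mulVec (x i))) ^ 2)
        = ∑ i, (a i - a i * ((P *ᵥ x i) ⬝ᵥ (P *ᵥ x i))) := by
          refine Finset.sum_congr rfl fun i _ => ?_
          rw [show P.mulVec (x i) = P *ᵥ x i from rfl, hvnorm]; ring
      _ = 1 - ∑ i, a i * ((P *ᵥ x i) ⬝ᵥ (P *ᵥ x i)) := by
          rw [Finset.sum_sub_distrib, hsum]
      _ = M.trace := by rw [hM, Matrix.trace_sub, hYtr, htrPXP]
  set S : Finset (Fin d) := Finset.univ.filter (fun j => hY.1.eigenvalues j ≠ 0) with hS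
  have hcard : S.card = Y.rank := by
    rw [hY.1.rank_eq_card_non_zero_eigs, Fintype.card_subtype]
  have hNjj : ∀ j, N j j = hY.1.eigenvalues j -
      (P *ᵥ (fun i => hY.1.eigenvectorBasis j i)) ⬝ᵥ
        (X *ᵥ (P *ᵥ (fun i => hY.1.eigenvectorBasis j i))) := by
    intro j
    rw [hNdiag j, hM, Matrix.sub_mulVec, dotProduct_sub, hYe j, hPXP]
  have hnonpos : ∀ j ∉ S, N j j ≤ 0 := by
    intro j hj
    have hz : hY.1.eigenvalues j = 0 := by
      by_contra h
      exact hj (Finset.mem_filter.2 ⟨Finset.mem_univ j, h⟩)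
    rw [hNjj j, hz, zero_sub, neg_nonpos]
    exact hXpsd _
  have hsplit : ∑ j, N j j ≤ ∑ j ∈ S, N j j := by
    rw [← Finset.sum_filter_add_sum_filter_not Finset.univ
      (fun j => hY.1.eigenvalues j ≠ 0) (fun j => N j j)]
    have hle : ∑ j ∈ Finset.univ.filter (fun j => ¬ hY.1.eigenvalues j ≠ 0), N j j ≤ 0 := by
      refine Finset.sum_nonpos fun j hj => ?_
      refine hnonpos j ?_
      intro hjS
      rcases Finset.mem_filter.1 hj with ⟨-, h⟩
      exact h (Finset.mem_filter.1 hjS).2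
    have : ∑ j ∈ Finset.univ.filter (fun j => hY.1.eigenvalues j ≠ 0), N j j
        = ∑ j ∈ S, N j j := by rw [hS]
    linarith
  have hfrobkey : ∀ A : Matrix (Fin d) (Fin d) ℝ, (Aᵀ * A).trace = ∑ i, ∑ j, A i j ^ 2 := by
    intro A
    simp only [Matrix.trace, Matrix.diag, Matrix.mul_apply, Matrix.transpose_apply, sq]
    rw [Finset.sum_comm]
  have hNTN : Nᵀ * N = Uᵀ * (Mᵀ * (M * U)) := by
    rw [hN]
    simp only [Matrix.transpose_mul, Matrix.transpose_transpose, Matrix.mul_assoc]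
    rw [← Matrix.mul_assoc U Uᵀ, h2, Matrix.one_mul]
  have hfrob : ∑ i, ∑ j, N i j ^ 2 = ∑ i, ∑ j, M i j ^ 2 := by
    rw [← hfrobkey N, ← hfrobkey M, hNTN, Matrix.trace_mul_comm Uᵀ (Mᵀ * (M * U))]
    simp only [Matrix.mul_assoc]
    rw [h2, Matrix.mul_one]
  have hdiag_le : ∑ j ∈ S, (N j j) ^ 2 ≤ ∑ i, ∑ j, (M i j) ^ 2 := by
    calc ∑ j ∈ S, (N j j) ^ 2 ≤ ∑ j, (N j j) ^ 2 :=
        Finset.sum_le_sum_of_subset_of_nonneg (Finset.subset_univ S) (fun _ _ _ => sq_nonneg _)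
      _ ≤ ∑ i, ∑ j, (N i j) ^ 2 :=
        Finset.sum_le_sum fun i _ =>
          Finset.single_le_sum (f := fun j => (N i j) ^ 2) (fun j _ => sq_nonneg _) (Finset.mem_univ i)
      _ = ∑ i, ∑ j, (M i j) ^ 2 := hfrob
  have hcs : ∑ j ∈ S, N j j ≤ Real.sqrt S.card * Real.sqrt (∑ i, ∑ j, (M i j) ^ 2) := by
    have h := sq_sum_le_card_mul_sum_sq (s := S) (f := fun j => N j j)
    calc ∑ j ∈ S, N j j ≤ Real.sqrt ((∑ j ∈ S, N j j) ^ 2) := by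
          rw [Real.sqrt_sq_eq_abs]; exact le_abs_self _
      _ ≤ Real.sqrt ((S.card : ℝ) * ∑ j ∈ S, (N j j) ^ 2) := Real.sqrt_le_sqrt (by exact_mod_cast h)
      _ ≤ Real.sqrt ((S.card : ℝ) * ∑ i, ∑ j, (M i j) ^ 2) := Real.sqrt_le_sqrt (by
          have hc : (0:ℝ) ≤ (S.card : ℝ) := by positivity
          exact mul_le_mul_of_nonneg_left hdiag_le hc)
      _ = Real.sqrt S.card * Real.sqrt (∑ i, ∑ j, (M i j) ^ 2) := Real.sqrt_mul (Nat.cast_nonneg _) _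
  rw [hLHS, ← htrN]
  calc ∑ j, N j j ≤ ∑ j ∈ S, N j j := hsplit
    _ ≤ Real.sqrt S.card * Real.sqrt (∑ i, ∑ j, (M i j) ^ 2) := hcs
    _ = Real.sqrt (Y.rank) * frobNorm M := by rw [hcard]; simp only [frobNorm]
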